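/- Let C₁, C₂, C₃ > 0 and r, γ₁, γ₂ ∈ ℝ be real constants, let β(n) = C₂ · n^r · exp(C₁ · n^{2/3}), and let α : ℕ → ℝ be a sequence such that |α(n)/β(n) − 1 − γ₁·n^{−2/3} − γ₂·n^{−4/3}| ≤ C₃ · n^{−2} for all n > N₀ for some N₀. Then there exists N ≥ N₀ such that α is log-concave for n > N, i.e. α(n)² > α(n−1) · α(n+1) for all integers n > N. -/

import Mathlib

lemma second_diff_mvt (f f' f'' : ℝ → ℝ) (x : ℝ) (hx : (2:ℝ) ≤ x)
    (hd1 : ∀ y : ℝ, 0 < y → HasDerivAt f (f' y) y)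
    (hd2 : ∀ y : ℝ, 0 < y → HasDerivAt f' (f'' y) y) :
    ∃ ξ, x - 1 < ξ ∧ ξ < x + 1 ∧ 2 * f x - f (x-1) - f (x+1) = - f'' ξ := by
  set g : ℝ → ℝ := fun s => f (x + s) - f (x - 1 + s) with hg
  have hg' : ∀ s ∈ Set.Icc (0:ℝ) 1, HasDerivAt g (f' (x + s) - f' (x - 1 + s)) s := by
    intro s hs
    obtain ⟨hs0, hs1⟩ := hs
    have h1 : HasDerivAt (fun s : ℝ => f (x + s)) (f' (x + s) * 1) s :=
      (hd1 (x + s) (by linarith)).comp s ((hasDerivAt_id s).const_add x)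
    have h2 : HasDerivAt (fun s : ℝ => f (x - 1 + s)) (f' (x - 1 + s) * 1) s :=
      (hd1 (x - 1 + s) (by linarith)).comp s ((hasDerivAt_id s).const_add (x - 1))
    exact (h1.sub h2).congr_deriv (by ring)
  have hmvt := exists_hasDerivAt_eq_slope g (fun s => f' (x + s) - f' (x - 1 + s))
    (by norm_num : (0:ℝ) < 1)
    (fun s hs => ((hg' s hs).continuousAt).continuousWithinAt)
    (fun s hs => hg' s (Set.mem_Icc_of_Ioo hs))
  obtain ⟨cc, hcc, hceq⟩ := hmvt
  obtain ⟨hc0, hc1⟩ := hcc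
  have hmvt2 := exists_hasDerivAt_eq_slope f' f''
    (show x - 1 + cc < x + cc by linarith)
    (fun y hy => ((hd2 y (by simp only [Set.mem_Icc] at hy; linarith)).continuousAt).continuousWithinAt)
    (fun y hy => hd2 y (by simp only [Set.mem_Ioo] at hy; linarith))
  obtain ⟨ξ, hξ, hξeq⟩ := hmvt2
  obtain ⟨hξ1, hξ2⟩ := Set.mem_Ioo.mp hξ
  refine ⟨ξ, by linarith, by linarith, ?_⟩
  have e1 : g 1 = f (x+1) - f x := by simp only [hg]; norm_num
  have e0 : g 0 = f x - f (x-1) := by simp only [hg]; norm_num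
  have hd : x + cc - (x - 1 + cc) = 1 := by ring
  rw [hd, div_one] at hξeq
  simp only [sub_zero, div_one] at hceq
  linarith [hceq, hξeq]

lemma second_diff_rpow (a x : ℝ) (hx : (2:ℝ) ≤ x) :
    ∃ ξ, x - 1 < ξ ∧ ξ < x + 1 ∧
      2 * x ^ a - (x-1) ^ a - (x+1) ^ a = -(a * (a-1) * ξ ^ (a-2)) := by
  obtain ⟨ξ, h1, h2, h3⟩ := second_diff_mvt (fun y => y ^ a) (fun y => a * y ^ (a-1))
    (fun y => a * ((a-1) * y ^ (a-1-1))) x hx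
    (fun y hy => Real.hasDerivAt_rpow_const (Or.inl hy.ne'))
    (fun y hy => (Real.hasDerivAt_rpow_const (Or.inl hy.ne')).const_mul a)
  refine ⟨ξ, h1, h2, ?_⟩
  rw [h3, show a - 1 - 1 = a - 2 by ring]
  ring

lemma second_diff_log (x : ℝ) (hx : (2:ℝ) ≤ x) :
    ∃ ξ, x - 1 < ξ ∧ ξ < x + 1 ∧
      2 * Real.log x - Real.log (x-1) - Real.log (x+1) = (ξ^2)⁻¹ := by
  obtain ⟨ξ, h1, h2, h3⟩ := second_diff_mvt Real.log (fun y => y⁻¹) (fun y => -(y^2)⁻¹) x hx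
    (fun y hy => Real.hasDerivAt_log hy.ne')
    (fun y hy => hasDerivAt_inv hy.ne')
  exact ⟨ξ, h1, h2, by rw [h3]; ring⟩

lemma rpow_anti {a b p : ℝ} (ha : 0 < a) (hab : a ≤ b) (hp : p ≤ 0) : b ^ p ≤ a ^ p :=
  Real.rpow_le_rpow_of_nonpos ha hab hp

lemma rpow_neg_two_eq (y : ℝ) (hy : 0 ≤ y) : y ^ (-(2:ℝ)) = (y^2)⁻¹ := by
  rw [show (-(2:ℝ)) = -((2:ℕ):ℝ) by norm_num, Real.rpow_neg hy, Real.rpow_natCast]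


lemma log_taylor_bound (γ₁ γ₂ C₃ : ℝ) (hC₃ : 0 < C₃) (u t : ℝ)
    (ht0 : 0 < t) (ht1 : t ≤ 1)
    (hMt : (|γ₁| + |γ₂| + C₃) * t ≤ 1/2)
    (hu : |u - γ₁ * t - γ₂ * t^2| ≤ C₃ * t^3) :
    0 < 1 + u ∧
    |Real.log (1 + u) - γ₁ * t - (γ₂ - γ₁^2/2) * t^2|
      ≤ (2*(|γ₁|+|γ₂|+C₃)^3 + C₃ + (|γ₂|+C₃)*((|γ₁|+|γ₂|+C₃)+|γ₁|)/2) * t^3 := by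
  set M : ℝ := |γ₁| + |γ₂| + C₃ with hM
  clear_value M
  have hM0 : 0 < M := by rw [hM]; positivity
  have ht2 : t^2 ≤ t := by nlinarith
  have ht3 : t^3 ≤ t := by nlinarith
  have ht32 : t^3 ≤ t^2 := by nlinarith
  obtain ⟨hul, hur⟩ := abs_le.mp hu
  have ha1 : γ₁ * t ≤ |γ₁| * t := mul_le_mul_of_nonneg_right (le_abs_self γ₁) ht0.le
  have ha1' : -(|γ₁| * t) ≤ γ₁ * t := by nlinarith [neg_abs_le γ₁]
  have ha2 : γ₂ * t^2 ≤ |γ₂| * t^2 := mul_le_mul_of_nonneg_right (le_abs_self γ₂) (sq_nonneg t)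
  have ha2' : -(|γ₂| * t^2) ≤ γ₂ * t^2 := by nlinarith [neg_abs_le γ₂, sq_nonneg t]
  have hb2 : |γ₂| * t^2 ≤ |γ₂| * t := mul_le_mul_of_nonneg_left ht2 (abs_nonneg γ₂)
  have hb3 : C₃ * t^3 ≤ C₃ * t := mul_le_mul_of_nonneg_left ht3 hC₃.le
  have habs_u : |u| ≤ M * t := by
    rw [abs_le]; rw [hM]; constructor <;> [nlinarith; nlinarith]
  have hu_half : |u| ≤ 1/2 := habs_u.trans hMt
  obtain ⟨huh1, huh2⟩ := abs_le.mp hu_half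
  have hpos : 0 < 1 + u := by linarith
  have hlt : |(-u)| < 1 := by rw [abs_neg]; linarith [abs_nonneg u]
  have hlog := Real.abs_log_sub_add_sum_range_le hlt 2
  have hsum : (∑ i ∈ Finset.range 2, (-u) ^ (i + 1) / ((i:ℝ) + 1)) = -u + u^2/2 := by
    simp [Finset.sum_range_succ]; ring
  rw [hsum, abs_neg, sub_neg_eq_add] at hlog
  have hrem : |Real.log (1+u) - u + u^2/2| ≤ 2 * (M*t)^3 := by
    have h1 : |u|^3 / (1 - |u|) ≤ 2*|u|^3 := by
      rw [div_le_iff₀ (by linarith)]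
      nlinarith [abs_nonneg u, pow_nonneg (abs_nonneg u) 3]
    have h2 : |u|^3 ≤ (M*t)^3 := pow_le_pow_left₀ (abs_nonneg u) habs_u 3
    have h3 : Real.log (1+u) - u + u^2/2 = (-u + u^2/2) + Real.log (1+u) := by ring
    rw [h3]
    calc |(-u + u^2/2) + Real.log (1+u)| ≤ |u|^(2+1)/(1 - |u|) := hlog
      _ = |u|^3/(1-|u|) := by norm_num
      _ ≤ 2*|u|^3 := h1
      _ ≤ 2*(M*t)^3 := by linarith
  have hb32 : C₃ * t^3 ≤ C₃ * t^2 := mul_le_mul_of_nonneg_left ht32 hC₃.le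
  have hd1 : |u - γ₁*t| ≤ (|γ₂| + C₃) * t^2 := by
    rw [abs_le]; constructor <;> linarith
  have hd2 : |u + γ₁*t| ≤ (M + |γ₁|) * t := by
    calc |u + γ₁*t| ≤ |u| + |γ₁*t| := abs_add_le _ _
      _ = |u| + |γ₁| *t := by rw [abs_mul, abs_of_pos ht0]
      _ ≤ M*t + |γ₁| *t := by linarith
      _ = (M + |γ₁|)*t := by ring
  have hd3 : |u^2 - γ₁^2*t^2| ≤ (|γ₂|+C₃)*(M+|γ₁|) * t^3 := by
    have he : u^2 - γ₁^2*t^2 = (u - γ₁*t)*(u + γ₁*t) := by ring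
    rw [he, abs_mul]
    calc |u - γ₁*t| * |u + γ₁*t| ≤ ((|γ₂|+C₃)*t^2) * ((M+|γ₁|)*t) :=
          mul_le_mul hd1 hd2 (abs_nonneg _) (by positivity)
      _ = (|γ₂|+C₃)*(M+|γ₁|) * t^3 := by ring
  refine ⟨hpos, ?_⟩
  obtain ⟨hr1, hr2⟩ := abs_le.mp hrem
  obtain ⟨h31, h32⟩ := abs_le.mp hd3
  have hiden : Real.log (1+u) - γ₁*t - (γ₂ - γ₁^2/2)*t^2
      = (Real.log (1+u) - u + u^2/2) + (u - γ₁*t - γ₂*t^2) - (u^2 - γ₁^2*t^2)/2 := by ring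
  rw [abs_le, hiden]
  have hexp : (M*t)^3 = M^3 * t^3 := by ring
  rw [hexp] at hr1 hr2
  constructor
  · linarith [hr1, hul, h32]
  · linarith [hr2, hur, h31]

set_option maxHeartbeats 1600000 in
/-- If `α n = β n · (1 + γ₁·n^(−2/3) + γ₂·n^(−4/3) + O(n^(−2)))` with
`β n = C₂ · n^r · exp (C₁ · n^(2/3))`, then `α` is eventually log-concave. -/
theorem eventually_log_concave_of_asymptotic
    (C₁ C₂ C₃ : ℝ) (hC₁ : 0 < C₁) (hC₂ : 0 < C₂) (hC₃ : 0 < C₃)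
    (r γ₁ γ₂ : ℝ) (α : ℕ → ℝ) (β : ℕ → ℝ)
    (hβ : ∀ n : ℕ, β n = C₂ * (n : ℝ) ^ r * Real.exp (C₁ * (n : ℝ) ^ ((2 : ℝ) / 3)))
    (N₀ : ℕ)
    (hα : ∀ n : ℕ, N₀ < n →
      |α n / β n - 1 - γ₁ * (n : ℝ) ^ (-(2 : ℝ) / 3) - γ₂ * (n : ℝ) ^ (-(4 : ℝ) / 3)|
        ≤ C₃ * (n : ℝ) ^ (-(2 : ℝ))) :
    ∃ N : ℕ, N₀ ≤ N ∧ ∀ n : ℕ, N < n → α n ^ 2 > α (n - 1) * α (n + 1) := by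
  obtain ⟨M, hM⟩ : ∃ M : ℝ, M = |γ₁| + |γ₂| + C₃ := ⟨_, rfl⟩
  obtain ⟨cl, hcl⟩ : ∃ c : ℝ, c = γ₂ - γ₁^2/2 := ⟨_, rfl⟩
  obtain ⟨C₄, hC₄⟩ : ∃ C₄ : ℝ, C₄ = 2*M^3 + C₃ + (|γ₂|+C₃)*(M+|γ₁|)/2 := ⟨_, rfl⟩
  obtain ⟨C₅, hC₅⟩ : ∃ C₅ : ℝ, C₅ = |r| + (10/9*|γ₁| + 28/9*|cl|) + 4*C₄ + 1 := ⟨_, rfl⟩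
  have hM0 : 0 < M := by rw [hM]; positivity
  have hC₄0 : 0 < C₄ := by rw [hC₄]; positivity
  have hC₅0 : 0 < C₅ := by
    rw [hC₅]
    have := abs_nonneg r; have := abs_nonneg γ₁; have := abs_nonneg cl
    linarith
  have hβpos : ∀ m : ℕ, 0 < (m:ℝ) → 0 < β m := by
    intro m hm; rw [hβ]; positivity
  -- Key pointwise claim
  have key : ∀ m : ℕ, N₀ < m → 1 ≤ (m:ℝ) → 2*M ≤ (m:ℝ)^((2:ℝ)/3) →
      0 < α m ∧
      |Real.log (α m / β m) - γ₁ * (m:ℝ)^(-(2:ℝ)/3) - cl * (m:ℝ)^(-(4:ℝ)/3)|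
        ≤ C₄ * (m:ℝ)^(-(2:ℝ)) := by
    intro m hm hm1 hm23
    have hx0 : (0:ℝ) < m := by linarith
    have ht0 : 0 < (m:ℝ)^(-(2:ℝ)/3) := Real.rpow_pos_of_pos hx0 _
    have hts : (m:ℝ)^(-(2:ℝ)/3) * (m:ℝ)^((2:ℝ)/3) = 1 := by
      rw [← Real.rpow_add hx0]; norm_num
    have hs1 : 1 ≤ (m:ℝ)^((2:ℝ)/3) := by
      have h := Real.rpow_le_rpow zero_le_one hm1 (by norm_num : (0:ℝ) ≤ 2/3)
      rwa [Real.one_rpow] at h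
    have ht1 : (m:ℝ)^(-(2:ℝ)/3) ≤ 1 := by
      have h := mul_le_mul_of_nonneg_left hs1 ht0.le
      linarith only [h, hts]
    have hMt : (|γ₁| + |γ₂| + C₃) * (m:ℝ)^(-(2:ℝ)/3) ≤ 1/2 := by
      rw [← hM]
      linarith only [mul_le_mul_of_nonneg_right hm23 ht0.le, hts]
    have ht2 : (m:ℝ)^(-(4:ℝ)/3) = ((m:ℝ)^(-(2:ℝ)/3))^2 := by
      rw [← Real.rpow_natCast ((m:ℝ)^(-(2:ℝ)/3)) 2, ← Real.rpow_mul hx0.le]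
      norm_num
    have ht3 : (m:ℝ)^(-(2:ℝ)) = ((m:ℝ)^(-(2:ℝ)/3))^3 := by
      rw [← Real.rpow_natCast ((m:ℝ)^(-(2:ℝ)/3)) 3, ← Real.rpow_mul hx0.le]
      norm_num
    have hαm := hα m hm
    rw [ht2, ht3] at hαm
    obtain ⟨hpos1, hbound⟩ := log_taylor_bound γ₁ γ₂ C₃ hC₃ (α m / β m - 1)
      ((m:ℝ)^(-(2:ℝ)/3)) ht0 ht1 hMt (by
        have he : α m / β m - 1 - γ₁ * (m:ℝ)^(-(2:ℝ)/3) - γ₂ * ((m:ℝ)^(-(2:ℝ)/3))^2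
            = (α m / β m - 1) - γ₁ * (m:ℝ)^(-(2:ℝ)/3) - γ₂ * ((m:ℝ)^(-(2:ℝ)/3))^2 := by ring
        rw [← he]; exact hαm)
    have hfm : (1:ℝ) + (α m / β m - 1) = α m / β m := by ring
    have hbm := hβpos m hx0
    have hfpos : 0 < α m / β m := by linarith only [hpos1]
    constructor
    · have h := mul_pos hfpos hbm
      rwa [div_mul_cancel₀ _ hbm.ne'] at h
    · rw [hfm] at hbound
      rw [ht2, ht3, hcl, hC₄, hM]
      exact hbound
  -- Choice of N
  obtain ⟨T, hT⟩ : ∃ T : ℝ, T = max (2*M) (18*C₅/C₁) := ⟨_, rfl⟩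
  have hT0 : 0 < T := lt_of_lt_of_le (by positivity : (0:ℝ) < 2*M) (hT ▸ le_max_left _ _)
  refine ⟨max (N₀ + 2) (max 3 (⌈T^((3:ℝ)/2)⌉₊ + 1)), le_trans (by omega) (le_max_left _ _), ?_⟩
  intro n hn
  have hmax1 : N₀ + 2 ≤ max (N₀ + 2) (max 3 (⌈T^((3:ℝ)/2)⌉₊ + 1)) := le_max_left _ _
  have hmax2 : 3 ≤ max (N₀ + 2) (max 3 (⌈T^((3:ℝ)/2)⌉₊ + 1)) :=
    le_trans (le_max_left _ _) (le_max_right _ _)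
  have hmax3 : ⌈T^((3:ℝ)/2)⌉₊ + 1 ≤ max (N₀ + 2) (max 3 (⌈T^((3:ℝ)/2)⌉₊ + 1)) :=
    le_trans (le_max_right _ _) (le_max_right _ _)
  have hn4 : 4 ≤ n := by omega
  have hx4 : (4:ℝ) ≤ (n:ℝ) := by exact_mod_cast Nat.cast_le.mpr hn4
  have hy0 : (0:ℝ) < (n:ℝ) - 1 := by linarith
  have hy1 : (1:ℝ) ≤ (n:ℝ) - 1 := by linarith
  have hy2 : (2:ℝ) ≤ (n:ℝ) - 1 := by linarith
  have hx2 : (2:ℝ) ≤ (n:ℝ) := by linarith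
  -- (n:ℝ)-1 dominates T^{3/2}
  have hceil : (⌈T^((3:ℝ)/2)⌉₊ : ℝ) ≤ (n:ℝ) - 1 := by
    have h : (⌈T^((3:ℝ)/2)⌉₊ + 1 : ℕ) ≤ n := by omega
    have h2 : ((⌈T^((3:ℝ)/2)⌉₊ + 1 : ℕ) : ℝ) ≤ (n:ℝ) := Nat.cast_le.mpr h
    push_cast at h2
    linarith
  have hyT : T^((3:ℝ)/2) ≤ (n:ℝ) - 1 := le_trans (Nat.le_ceil _) hceil
  have hyTall : T ≤ ((n:ℝ)-1)^((2:ℝ)/3) := by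
    have h1 : (T^((3:ℝ)/2))^((2:ℝ)/3) = T := by
      rw [← Real.rpow_mul hT0.le]; norm_num
    calc T = (T^((3:ℝ)/2))^((2:ℝ)/3) := h1.symm
      _ ≤ ((n:ℝ)-1)^((2:ℝ)/3) :=
        Real.rpow_le_rpow (Real.rpow_nonneg hT0.le _) hyT (by norm_num)
  have h2M : 2*M ≤ ((n:ℝ)-1)^((2:ℝ)/3) := le_trans (hT ▸ le_max_left _ _) hyTall
  have h18 : 18*C₅/C₁ ≤ ((n:ℝ)-1)^((2:ℝ)/3) := le_trans (hT ▸ le_max_right _ _) hyTall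
  -- casts
  have hc1 : ((n-1:ℕ):ℝ) = (n:ℝ) - 1 := by
    rw [Nat.cast_sub (by omega : 1 ≤ n)]; norm_num
  have hc3 : ((n+1:ℕ):ℝ) = (n:ℝ) + 1 := by push_cast; ring
  -- apply key at n-1, n, n+1
  obtain ⟨hpm, hbminus⟩ := key (n-1) (by omega) (by rw [hc1]; linarith) (by rw [hc1]; exact h2M)
  obtain ⟨hp₀, hb₀⟩ := key n (by omega) (by linarith)
    (le_trans h2M (Real.rpow_le_rpow hy0.le (by linarith) (by norm_num)))
  obtain ⟨hpp, hbplus⟩ := key (n+1) (by omega) (by rw [hc3]; linarith)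
    (by rw [hc3]; exact le_trans h2M (Real.rpow_le_rpow hy0.le (by linarith) (by norm_num)))
  rw [hc1] at hbminus
  rw [hc3] at hbplus
  -- decomposition of logs
  have decomp : ∀ m : ℕ, 0 < (m:ℝ) → 0 < α m →
      Real.log (α m) = Real.log C₂ + r * Real.log (m:ℝ) + C₁ * (m:ℝ)^((2:ℝ)/3)
        + Real.log (α m / β m) := by
    intro m hm0 hαm0
    have hbm := hβpos m hm0
    have hlogdiv : Real.log (α m / β m) = Real.log (α m) - Real.log (β m) :=
      Real.log_div hαm0.ne' hbm.ne'
    have hlogβ : Real.log (β m) = Real.log C₂ + r * Real.log (m:ℝ) + C₁ * (m:ℝ)^((2:ℝ)/3) := by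
      rw [hβ m, Real.log_mul (by positivity) (Real.exp_ne_zero _),
        Real.log_mul hC₂.ne' (Real.rpow_pos_of_pos hm0 r).ne', Real.log_rpow hm0, Real.log_exp]
    rw [hlogdiv, hlogβ]; ring
  have E₀ := decomp n (by linarith) hp₀
  have Eminus := decomp (n-1) (by rw [hc1]; linarith) hpm
  have Eplus := decomp (n+1) (by rw [hc3]; linarith) hpp
  rw [hc1] at Eminus
  rw [hc3] at Eplus
  -- second differences
  obtain ⟨ξD, hξD1, hξD2, hSD⟩ := second_diff_rpow ((2:ℝ)/3) (n:ℝ) hx2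
  obtain ⟨ξA, hξA1, hξA2, hSA⟩ := second_diff_log (n:ℝ) hx2
  obtain ⟨ξ₁, hξ11, hξ12, hS1⟩ := second_diff_rpow (-(2:ℝ)/3) (n:ℝ) hx2
  obtain ⟨ξ₂, hξ21, hξ22, hS2⟩ := second_diff_rpow (-(4:ℝ)/3) (n:ℝ) hx2
  have hξD0 : 0 < ξD := by linarith
  have hξA0 : 0 < ξA := by linarith
  have hξ10 : 0 < ξ₁ := by linarith
  have hξ20 : 0 < ξ₂ := by linarith
  have hyinv0 : 0 < ((n:ℝ)-1)^(-(2:ℝ)) := Real.rpow_pos_of_pos hy0 _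
  -- lower bound for the exponential second difference
  have hDlow : 2 * (n:ℝ)^((2:ℝ)/3) - ((n:ℝ)-1)^((2:ℝ)/3) - ((n:ℝ)+1)^((2:ℝ)/3)
      ≥ 1/18 * ((n:ℝ)-1)^(-(4:ℝ)/3) := by
    rw [hSD]
    have hDe : -((2:ℝ)/3 * ((2:ℝ)/3 - 1) * ξD ^ ((2:ℝ)/3 - 2))
        = 2/9 * ξD ^ (-(4:ℝ)/3) := by
      rw [show (2:ℝ)/3 - 2 = -(4:ℝ)/3 by norm_num]; ring
    rw [hDe]
    have s1 : ((n:ℝ)+1) ^ (-(4:ℝ)/3) ≤ ξD ^ (-(4:ℝ)/3) :=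
      Real.rpow_le_rpow_of_nonpos hξD0 hξD2.le (by norm_num)
    have s2 : (2*((n:ℝ)-1)) ^ (-(4:ℝ)/3) ≤ ((n:ℝ)+1) ^ (-(4:ℝ)/3) :=
      Real.rpow_le_rpow_of_nonpos (by linarith) (by linarith) (by norm_num)
    have s3 : (2*((n:ℝ)-1)) ^ (-(4:ℝ)/3)
        = (2:ℝ)^(-(4:ℝ)/3) * ((n:ℝ)-1)^(-(4:ℝ)/3) :=
      Real.mul_rpow (by norm_num) hy0.le
    have h24 : (2:ℝ)^((4:ℝ)/3) ≤ 4 := by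
      have e2 : (2:ℝ)^(2:ℝ) = (4:ℝ) := by
        rw [show (2:ℝ) = ((2:ℕ):ℝ) from by norm_num]
        rw [Real.rpow_natCast]
        norm_num
      calc (2:ℝ)^((4:ℝ)/3) ≤ (2:ℝ)^(2:ℝ) :=
            Real.rpow_le_rpow_of_exponent_le one_le_two (by norm_num)
        _ = 4 := e2
    have s4 : (1/4 : ℝ) ≤ (2:ℝ)^(-(4:ℝ)/3) := by
      have hpos : (0:ℝ) < (2:ℝ)^((4:ℝ)/3) := Real.rpow_pos_of_pos two_pos _
      have hneg : (2:ℝ)^(-(4:ℝ)/3) = ((2:ℝ)^((4:ℝ)/3))⁻¹ := by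
        rw [show -(4:ℝ)/3 = -((4:ℝ)/3) by norm_num, Real.rpow_neg (by norm_num)]
      rw [hneg]
      rw [show (1/4 : ℝ) = (4:ℝ)⁻¹ by norm_num]
      exact inv_anti₀ hpos h24
    have s5 : (1/4) * ((n:ℝ)-1)^(-(4:ℝ)/3) ≤ (2:ℝ)^(-(4:ℝ)/3) * ((n:ℝ)-1)^(-(4:ℝ)/3) :=
      mul_le_mul_of_nonneg_right s4 (Real.rpow_nonneg hy0.le _)
    have hy43pos : 0 < ((n:ℝ)-1)^(-(4:ℝ)/3) := Real.rpow_pos_of_pos hy0 _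
    linarith only [s1, s2, s5, s3]
  -- lower bound for r * (log second difference)
  have hrA : r * (2*Real.log (n:ℝ) - Real.log ((n:ℝ)-1) - Real.log ((n:ℝ)+1))
      ≥ -(|r| * ((n:ℝ)-1)^(-(2:ℝ))) := by
    rw [hSA]
    have hA2 : (ξA^2)⁻¹ ≤ ((n:ℝ)-1)^(-(2:ℝ)) := by
      rw [rpow_neg_two_eq _ hy0.le]
      exact inv_anti₀ (by positivity) (pow_le_pow_left₀ hy0.le hξA1.le 2)
    have hA0 : (0:ℝ) ≤ (ξA^2)⁻¹ := by positivity
    have habs : |r * (ξA^2)⁻¹| ≤ |r| * ((n:ℝ)-1)^(-(2:ℝ)) := by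
      rw [abs_mul, abs_of_nonneg hA0]
      exact mul_le_mul_of_nonneg_left hA2 (abs_nonneg r)
    linarith only [habs, neg_abs_le (r * (ξA^2)⁻¹)]
  -- lower bound for γ₁ * S₁
  have hb1 : ξ₁ ^ (-(8:ℝ)/3) ≤ ((n:ℝ)-1) ^ (-(2:ℝ)) := by
    calc ξ₁ ^ (-(8:ℝ)/3) ≤ ((n:ℝ)-1) ^ (-(8:ℝ)/3) :=
          Real.rpow_le_rpow_of_nonpos hy0 hξ11.le (by norm_num)
      _ ≤ ((n:ℝ)-1) ^ (-(2:ℝ)) :=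
          Real.rpow_le_rpow_of_exponent_le hy1 (by norm_num)
  have hg1 : γ₁ * (2*(n:ℝ)^(-(2:ℝ)/3) - ((n:ℝ)-1)^(-(2:ℝ)/3) - ((n:ℝ)+1)^(-(2:ℝ)/3))
      ≥ -(10/9*|γ₁| * ((n:ℝ)-1)^(-(2:ℝ))) := by
    rw [hS1]
    have he1 : -((-(2:ℝ)/3) * ((-(2:ℝ)/3) - 1) * ξ₁ ^ ((-(2:ℝ)/3) - 2))
        = -(10/9 * ξ₁ ^ (-(8:ℝ)/3)) := by
      rw [show (-(2:ℝ)/3 - 2) = -(8:ℝ)/3 by norm_num]; ring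
    rw [he1]
    have hpos1 : 0 < ξ₁ ^ (-(8:ℝ)/3) := Real.rpow_pos_of_pos hξ10 _
    have hA := mul_le_mul_of_nonneg_left hb1 (abs_nonneg γ₁)
    have hCC := mul_nonneg (by linarith only [le_abs_self γ₁] : (0:ℝ) ≤ |γ₁| - γ₁) hpos1.le
    linarith only [hA, hCC]
  -- lower bound for cl * S₂
  have hb2 : ξ₂ ^ (-(10:ℝ)/3) ≤ ((n:ℝ)-1) ^ (-(2:ℝ)) := by
    calc ξ₂ ^ (-(10:ℝ)/3) ≤ ((n:ℝ)-1) ^ (-(10:ℝ)/3) :=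
          Real.rpow_le_rpow_of_nonpos hy0 hξ21.le (by norm_num)
      _ ≤ ((n:ℝ)-1) ^ (-(2:ℝ)) :=
          Real.rpow_le_rpow_of_exponent_le hy1 (by norm_num)
  have hg2 : cl * (2*(n:ℝ)^(-(4:ℝ)/3) - ((n:ℝ)-1)^(-(4:ℝ)/3) - ((n:ℝ)+1)^(-(4:ℝ)/3))
      ≥ -(28/9*|cl| * ((n:ℝ)-1)^(-(2:ℝ))) := by
    rw [hS2]
    have he2 : -((-(4:ℝ)/3) * ((-(4:ℝ)/3) - 1) * ξ₂ ^ ((-(4:ℝ)/3) - 2))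
        = -(28/9 * ξ₂ ^ (-(10:ℝ)/3)) := by
      rw [show (-(4:ℝ)/3 - 2) = -(10:ℝ)/3 by norm_num]; ring
    rw [he2]
    have hpos2 : 0 < ξ₂ ^ (-(10:ℝ)/3) := Real.rpow_pos_of_pos hξ20 _
    have hA := mul_le_mul_of_nonneg_left hb2 (abs_nonneg cl)
    have hCC := mul_nonneg (by linarith only [le_abs_self cl] : (0:ℝ) ≤ |cl| - cl) hpos2.le
    linarith only [hA, hCC]
  -- C₄-error comparisons
  have hx2y : (n:ℝ)^(-(2:ℝ)) ≤ ((n:ℝ)-1)^(-(2:ℝ)) :=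
    Real.rpow_le_rpow_of_nonpos hy0 (by linarith) (by norm_num)
  have hxp2y : ((n:ℝ)+1)^(-(2:ℝ)) ≤ ((n:ℝ)-1)^(-(2:ℝ)) :=
    Real.rpow_le_rpow_of_nonpos hy0 (by linarith) (by norm_num)
  have hC₄x : C₄ * (n:ℝ)^(-(2:ℝ)) ≤ C₄ * ((n:ℝ)-1)^(-(2:ℝ)) :=
    mul_le_mul_of_nonneg_left hx2y hC₄0.le
  have hC₄xp : C₄ * ((n:ℝ)+1)^(-(2:ℝ)) ≤ C₄ * ((n:ℝ)-1)^(-(2:ℝ)) :=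
    mul_le_mul_of_nonneg_left hxp2y hC₄0.le
  obtain ⟨l₀, r₀⟩ := abs_le.mp hb₀
  obtain ⟨lminus, rminus⟩ := abs_le.mp hbminus
  obtain ⟨lplus, rplus⟩ := abs_le.mp hbplus
  -- dominant term beats C₅ y^{-2}
  have hyy : ((n:ℝ)-1)^(-(4:ℝ)/3) = ((n:ℝ)-1)^((2:ℝ)/3) * ((n:ℝ)-1)^(-(2:ℝ)) := by
    rw [← Real.rpow_add hy0]; norm_num
  have hkey5 : C₅ ≤ C₁/18 * ((n:ℝ)-1)^((2:ℝ)/3) := by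
    have h1 := mul_le_mul_of_nonneg_left h18 (by positivity : (0:ℝ) ≤ C₁/18)
    have heq : C₁/18 * (18*C₅/C₁) = C₅ := by field_simp
    linarith only [heq ▸ h1]
  have hmain : C₁ * (2 * (n:ℝ)^((2:ℝ)/3) - ((n:ℝ)-1)^((2:ℝ)/3) - ((n:ℝ)+1)^((2:ℝ)/3))
      ≥ C₅ * ((n:ℝ)-1)^(-(2:ℝ)) := by
    have hstep : C₅ * ((n:ℝ)-1)^(-(2:ℝ)) ≤ (C₁/18 * ((n:ℝ)-1)^((2:ℝ)/3)) * ((n:ℝ)-1)^(-(2:ℝ)) :=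
      mul_le_mul_of_nonneg_right hkey5 hyinv0.le
    have hstep2 := mul_le_mul_of_nonneg_left hDlow hC₁.le
    have heq2 : C₁ * (1/18 * ((n:ℝ)-1)^(-(4:ℝ)/3))
        = (C₁/18 * ((n:ℝ)-1)^((2:ℝ)/3)) * ((n:ℝ)-1)^(-(2:ℝ)) := by
      rw [hyy]; ring
    linarith only [heq2 ▸ hstep2, hstep]
  have hC₅y : C₅ * ((n:ℝ)-1)^(-(2:ℝ))
      = |r| * ((n:ℝ)-1)^(-(2:ℝ)) + 10/9*|γ₁| * ((n:ℝ)-1)^(-(2:ℝ))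
        + 28/9*|cl| * ((n:ℝ)-1)^(-(2:ℝ)) + 4*C₄ * ((n:ℝ)-1)^(-(2:ℝ))
        + ((n:ℝ)-1)^(-(2:ℝ)) := by
    rw [hC₅]; ring
  -- final log inequality
  have hlt : Real.log (α (n-1)) + Real.log (α (n+1)) < 2 * Real.log (α n) := by
    linarith only [E₀, Eminus, Eplus, hrA, hg1, hg2, hmain, hC₅y, hyinv0,
      l₀, r₀, lminus, rminus, lplus, rplus, hC₄x, hC₄xp]
  have e1 : α (n-1) * α (n+1) = Real.exp (Real.log (α (n-1)) + Real.log (α (n+1))) := by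
    rw [Real.exp_add, Real.exp_log hpm, Real.exp_log hpp]
  have e2 : α n ^ 2 = Real.exp (2 * Real.log (α n)) := by
    rw [two_mul, Real.exp_add, Real.exp_log hp₀, sq]
  rw [gt_iff_lt, e1, e2]
  exact Real.exp_lt_exp.mpr hlt
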